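/- If M is a finite abelian group whose holomorph Hol M equals the full symmetric group Sym M (i.e., every bijection of M is affine-linear), then M is trivial, cyclic of order 2, cyclic of order 3, or isomorphic to C2 × C2. -/

import Mathlib

section Aux

variable {M : Type*} [AddCommGroup M] [Fintype M]

omit [Fintype M] in
/-- Any permutation fixing `0` is additive, under the hypothesis. -/
lemma aux_additive
    (h : ∀ π : Equiv.Perm M, ∃ (a : AddAut M) (t : M), ∀ x, π x = a x + t)
    (π : Equiv.Perm M) (h0 : π 0 = 0) : ∀ x y : M, π (x + y) = π x + π y := by
  obtain ⟨a, t, ha⟩ := h π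
  have ht : t = 0 := by
    have := ha 0
    rw [h0, map_zero, zero_add] at this
    exact this.symm
  intro x y
  simp [ha, ht, map_add]

omit [Fintype M] in
/-- Every element satisfies `2u = 0` or `3u = 0`. -/
lemma aux_torsion
    (h : ∀ π : Equiv.Perm M, ∃ (a : AddAut M) (t : M), ∀ x, π x = a x + t)
    (u : M) : u + u = 0 ∨ u + u + u = 0 := by
  classical
  by_cases hu0 : u = 0
  · left; simp [hu0]
  by_cases h2 : u + u = 0
  · left; exact h2
  right
  have hne : u ≠ u + u := fun hh => hu0 (add_eq_left.mp hh.symm)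
  have h0 : Equiv.swap u (u + u) 0 = 0 :=
    Equiv.swap_apply_of_ne_of_ne (Ne.symm hu0) (Ne.symm h2)
  have key := aux_additive h (Equiv.swap u (u + u)) h0 u u
  rw [Equiv.swap_apply_left, Equiv.swap_apply_right] at key
  -- key : u = (u+u) + (u+u)
  have : u + u + u = (u + u + (u + u)) - u := by abel
  rw [← key] at this
  simpa using this

/-- The cardinality is at most 4. -/
lemma aux_card_le
    (h : ∀ π : Equiv.Perm M, ∃ (a : AddAut M) (t : M), ∀ x, π x = a x + t) :
    Fintype.card M ≤ 4 := by
  classical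
  by_contra hlt
  push_neg at hlt
  -- there are two distinct nonzero elements
  obtain ⟨u, v, huv, hu, hv⟩ : ∃ u v : M, u ≠ v ∧ u ≠ 0 ∧ v ≠ 0 := by
    have h3 : 1 < Fintype.card ({x : M // x ≠ 0}) := by
      rw [Fintype.card_subtype_compl, Fintype.card_subtype_eq]
      omega
    obtain ⟨⟨u, hu⟩, ⟨v, hv⟩, hne⟩ := Fintype.exists_pair_of_one_lt_card h3
    exact ⟨u, v, by simpa using Subtype.coe_ne_coe.mpr hne, hu, hv⟩
  -- find x outside {0, u, v, v - u}
  obtain ⟨x, hxmem⟩ : ∃ x : M, x ∉ ({0, u, v, v - u} : Finset M) := by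
    by_contra hc
    push_neg at hc
    have hsub : (Finset.univ : Finset M) ⊆ {0, u, v, v - u} :=
      Finset.subset_iff.mpr fun x _ => hc x
    have := Finset.card_le_card hsub
    have h4 : ({0, u, v, v - u} : Finset M).card ≤ 4 := by
      apply le_trans (Finset.card_insert_le _ _)
      have h1 := Finset.card_insert_le u ({v, v - u} : Finset M)
      have h2 := Finset.card_insert_le v ({v - u} : Finset M)
      simp only [Finset.card_singleton] at *
      omega
    rw [Finset.card_univ] at this
    omega
  simp only [Finset.mem_insert, Finset.mem_singleton, not_or] at hxmem
  obtain ⟨hx0, hxu, hxv, hxvu⟩ := hxmem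
  have h0 : Equiv.swap u v 0 = 0 :=
    Equiv.swap_apply_of_ne_of_ne (Ne.symm hu) (Ne.symm hv)
  have key := aux_additive h (Equiv.swap u v) h0 u x
  have hσx : Equiv.swap u v x = x := Equiv.swap_apply_of_ne_of_ne hxu hxv
  have hσux : Equiv.swap u v (u + x) = u + x := by
    apply Equiv.swap_apply_of_ne_of_ne
    · intro hh; exact hx0 (by rwa [add_eq_left] at hh)
    · intro hh
      apply hxvu
      rw [← hh]; abel
  rw [Equiv.swap_apply_left, hσx, hσux] at key
  exact huv (by rwa [add_left_inj] at key)

lemma aux_exponent_two {G : Type*} [CommGroup G] [Nontrivial G]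
    (hsq : ∀ g : G, g * g = 1) : Monoid.exponent G = 2 := by
  have hdvd : Monoid.exponent G ∣ 2 :=
    Monoid.exponent_dvd_of_forall_pow_eq_one fun g => by rw [pow_two]; exact hsq g
  rcases (Nat.dvd_prime Nat.prime_two).mp hdvd with h1 | h2
  · exfalso
    obtain ⟨a, b, hab⟩ := exists_pair_ne G
    apply hab
    have ha := Monoid.pow_exponent_eq_one a
    have hb := Monoid.pow_exponent_eq_one b
    rw [h1, pow_one] at ha hb
    rw [ha, hb]
  · exact h2

end Aux

/-- if every permutation of a finite abelian group `M` is affine-linear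
(i.e. `Hol M = Sym M`), then `M` is trivial, `C2`, `C3`, or `C2 × C2`. -/
theorem stmt2 (M : Type*) [AddCommGroup M] [Fintype M]
    (h : ∀ π : Equiv.Perm M, ∃ (a : AddAut M) (t : M), ∀ x, π x = a x + t) :
    Subsingleton M ∨ Nonempty (M ≃+ ZMod 2) ∨ Nonempty (M ≃+ ZMod 3) ∨
      Nonempty (M ≃+ (ZMod 2 × ZMod 2)) := by
  have hcard4 := aux_card_le h
  have hcard1 : 1 ≤ Fintype.card M := Fintype.card_pos
  interval_cases hc : Fintype.card M
  · -- card 1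
    left
    exact Fintype.card_le_one_iff_subsingleton.mp (by omega)
  · -- card 2
    right; left
    have : Fact (Nat.Prime 2) := ⟨by norm_num⟩
    exact ⟨addEquivOfPrimeCardEq (p := 2)
      (by rw [Nat.card_eq_fintype_card, hc]) (by rw [Nat.card_zmod])⟩
  · -- card 3
    right; right; left
    have : Fact (Nat.Prime 3) := ⟨by norm_num⟩
    exact ⟨addEquivOfPrimeCardEq (p := 3)
      (by rw [Nat.card_eq_fintype_card, hc]) (by rw [Nat.card_zmod])⟩
  · -- card 4: every element has order dividing 2
    right; right; right
    have h2 : ∀ u : M, u + u = 0 := by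
      intro u
      rcases aux_torsion h u with h2 | h3
      · exact h2
      · have hdvd3 : addOrderOf u ∣ 3 := by
          apply addOrderOf_dvd_of_nsmul_eq_zero
          rw [show (3 : ℕ) • u = u + u + u by abel]
          exact h3
        have hdvd4 : addOrderOf u ∣ 4 := by
          rw [← hc]
          exact addOrderOf_dvd_card
        have h1 : addOrderOf u = 1 := Nat.eq_one_of_dvd_coprimes (by norm_num) hdvd3 hdvd4
        have : u = 0 := AddMonoid.addOrderOf_eq_one_iff.mp h1
        simp [this]
    have hnontriv : Nontrivial M := Fintype.one_lt_card_iff_nontrivial.mp (by omega)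
    have hk1 : IsKleinFour (Multiplicative M) := by
      constructor
      · rw [Nat.card_eq_fintype_card, Fintype.card_multiplicative]
        exact hc
      · exact aux_exponent_two fun g => h2 g.toAdd
    have hk2 : IsKleinFour (Multiplicative (ZMod 2 × ZMod 2)) := by
      constructor
      · rw [Nat.card_eq_fintype_card, Fintype.card_multiplicative]
        simp
      · exact aux_exponent_two fun g => by
          show Multiplicative.ofAdd (g.toAdd + g.toAdd) = 1
          have : g.toAdd + g.toAdd = 0 := by revert g; decide
          rw [this]; rfl
    obtain ⟨e⟩ := IsKleinFour.nonempty_mulEquiv (G₁ := Multiplicative M)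
      (G₂ := Multiplicative (ZMod 2 × ZMod 2))
    exact ⟨AddEquiv.toMultiplicative.symm e⟩
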